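/- Let A₀ ∈ ℝ^{l×n} be nonzero, b ∈ ℝ^l, let 𝒜 : ℝ^p × ℝ^n → ℝ^l be a nonzero bilinear map, and let Γ₁, Γ₂, Γ₃ be symmetric positive definite matrices of sizes l, p, n respectively. Then the Tikhonov functional Φ(y,x) = ‖b - A₀x - 𝒜(y,x)‖²_{Γ₁⁻¹} + ‖y‖²_{Γ₂⁻¹} + ‖x‖²_{Γ₃⁻¹} is not a convex function on ℝ^p × ℝ^n. -/

import Mathlib

open Matrix

lemma ip_symm {l : ℕ} {M : Matrix (Fin l) (Fin l) ℝ} (hM : Mᵀ = M)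
    (u v : Fin l → ℝ) : u ⬝ᵥ (M *ᵥ v) = v ⬝ᵥ (M *ᵥ u) := by
  rw [dotProduct_comm, dotProduct_mulVec, ← mulVec_transpose, hM]

lemma ip_expand {l : ℕ} {M : Matrix (Fin l) (Fin l) ℝ} (hM : Mᵀ = M)
    (r c d : Fin l → ℝ) (s u : ℝ) :
    (r + s•c + u•d) ⬝ᵥ (M *ᵥ (r + s•c + u•d)) =
      r ⬝ᵥ (M *ᵥ r) + s^2 * (c ⬝ᵥ (M *ᵥ c)) + u^2 * (d ⬝ᵥ (M *ᵥ d))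
      + 2*s*(r ⬝ᵥ (M *ᵥ c)) + 2*u*(r ⬝ᵥ (M *ᵥ d)) + 2*s*u*(c ⬝ᵥ (M *ᵥ d)) := by
  have h1 := ip_symm hM c r
  have h2 := ip_symm hM d r
  have h3 := ip_symm hM d c
  simp only [mulVec_add, mulVec_smul, add_dotProduct, smul_dotProduct,
    dotProduct_add, dotProduct_smul, smul_eq_mul]
  rw [h1, h2, h3]; ring

set_option maxHeartbeats 1000000 in

/-- The Tikhonov functional of the bilinear inverse problem is never convex. -/
theorem tikhonov_not_convex {l p n : ℕ}
    (A₀ : Matrix (Fin l) (Fin n) ℝ) (hA₀ : A₀ ≠ 0)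
    (𝒜 : (Fin p → ℝ) →ₗ[ℝ] (Fin n → ℝ) →ₗ[ℝ] (Fin l → ℝ))
    (h𝒜 : ∃ y₀ x₀, 𝒜 y₀ x₀ ≠ 0)
    (b : Fin l → ℝ)
    (Γ₁ : Matrix (Fin l) (Fin l) ℝ) (hΓ₁ : Γ₁.PosDef)
    (Γ₂ : Matrix (Fin p) (Fin p) ℝ) (hΓ₂ : Γ₂.PosDef)
    (Γ₃ : Matrix (Fin n) (Fin n) ℝ) (hΓ₃ : Γ₃.PosDef)
    (Φ : (Fin p → ℝ) × (Fin n → ℝ) → ℝ)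
    (hΦ : ∀ y x, Φ (y, x) =
      (b - A₀ *ᵥ x - 𝒜 y x) ⬝ᵥ (Γ₁⁻¹ *ᵥ (b - A₀ *ᵥ x - 𝒜 y x))
      + y ⬝ᵥ (Γ₂⁻¹ *ᵥ y) + x ⬝ᵥ (Γ₃⁻¹ *ᵥ x)) :
    ¬ ConvexOn ℝ Set.univ Φ := by
  obtain ⟨y₀, x₀, hB⟩ := h𝒜
  intro hconv
  -- symmetry of the inverse matrices
  have hsym1 : (Γ₁⁻¹)ᵀ = Γ₁⁻¹ := by
    have := hΓ₁.1.inv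
    simpa [Matrix.IsHermitian] using this
  -- abbreviations
  set B := 𝒜 y₀ x₀ with hBdef
  set a1 := A₀ *ᵥ x₀ with ha1
  set q0 := b ⬝ᵥ (Γ₁⁻¹ *ᵥ b) with hq0
  set qa := a1 ⬝ᵥ (Γ₁⁻¹ *ᵥ a1) with hqa
  set qB := B ⬝ᵥ (Γ₁⁻¹ *ᵥ B) with hqB
  set rba := b ⬝ᵥ (Γ₁⁻¹ *ᵥ a1) with hrba
  set rbB := b ⬝ᵥ (Γ₁⁻¹ *ᵥ B) with hrbB
  set raB := a1 ⬝ᵥ (Γ₁⁻¹ *ᵥ B) with hraB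
  set p2 := y₀ ⬝ᵥ (Γ₂⁻¹ *ᵥ y₀) with hp2
  set p3 := x₀ ⬝ᵥ (Γ₃⁻¹ *ᵥ x₀) with hp3
  have hqBpos : 0 < qB := by
    have := hΓ₁.inv.dotProduct_mulVec_pos hB
    simpa using this
  have hp2n : 0 ≤ p2 := by
    rcases eq_or_ne y₀ 0 with h | h
    · simp [hp2, h]
    · have := hΓ₂.inv.dotProduct_mulVec_pos h; simpa using this.le
  have hp3n : 0 ≤ p3 := by
    rcases eq_or_ne x₀ 0 with h | h
    · simp [hp3, h]
    · have := hΓ₃.inv.dotProduct_mulVec_pos h; simpa using this.le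
  have hqan : 0 ≤ qa := by
    rcases eq_or_ne a1 0 with h | h
    · simp [hqa, h]
    · have := hΓ₁.inv.dotProduct_mulVec_pos h; simpa using this.le
  -- value of Φ along the two-parameter family
  have key : ∀ α β : ℝ, Φ (α • y₀, β • x₀) =
      q0 + β^2*qa + (α*β)^2*qB - 2*β*rba - 2*(α*β)*rbB + 2*β*(α*β)*raB
        + α^2*p2 + β^2*p3 := by
    intro α β
    rw [hΦ]
    have hres : b - A₀ *ᵥ (β • x₀) - 𝒜 (α • y₀) (β • x₀)
        = b + (-β) • a1 + (-(α*β)) • B := by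
      simp only [mulVec_smul, _root_.map_smul, LinearMap.smul_apply, smul_smul]
      module
    rw [hres, ip_expand hsym1]
    have h2 : (α • y₀) ⬝ᵥ (Γ₂⁻¹ *ᵥ (α • y₀)) = α^2 * p2 := by
      rw [mulVec_smul, dotProduct_smul, smul_dotProduct, smul_eq_mul, smul_eq_mul, hp2]; ring
    have h3 : (β • x₀) ⬝ᵥ (Γ₃⁻¹ *ᵥ (β • x₀)) = β^2 * p3 := by
      rw [mulVec_smul, dotProduct_smul, smul_dotProduct, smul_eq_mul, smul_eq_mul, hp3]; ring
    rw [h2, h3]; ring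
  -- choose t large
  set K := 2*qa + 2*p2 + 2*p3 + 2*qB - 4*rbB with hK
  set t := (|K| + 4*|raB|)/(4*qB) + 1 with ht
  have ht1 : 1 ≤ t := by
    rw [ht]
    have h : 0 ≤ (|K| + 4*|raB|)/(4*qB) := by positivity
    linarith
  have ht2 : 4*t*qB = |K| + 4*|raB| + 4*qB := by
    rw [ht]; field_simp
  -- midpoint inequality
  have hmid := hconv.2 (Set.mem_univ ((t+1) • y₀, (1-t) • x₀))
    (Set.mem_univ ((t-1) • y₀, (-1-t) • x₀))
    (by norm_num : (0:ℝ) ≤ 1/2) (by norm_num : (0:ℝ) ≤ 1/2) (by norm_num)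
  have hmidpt : (1/2 : ℝ) • (((t+1) • y₀, (1-t) • x₀) : (Fin p → ℝ) × (Fin n → ℝ))
      + (1/2 : ℝ) • (((t-1) • y₀, (-1-t) • x₀) : (Fin p → ℝ) × (Fin n → ℝ))
      = (t • y₀, (-t) • x₀) := by
    simp only [Prod.smul_mk, Prod.mk_add_mk, Prod.mk.injEq]
    constructor <;> module
  rw [hmidpt] at hmid
  have h1 := key (t+1) (1-t)
  have h2 := key (t-1) (-1-t)
  have h0 := key t (-t)
  rw [h1, h2, h0] at hmid
  have e : 4*t^2*qB = t*(|K| + 4*|raB| + 4*qB) := by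
    rw [← ht2]; ring
  have htn : (0:ℝ) ≤ t := le_trans zero_le_one ht1
  have ht1' : (0:ℝ) ≤ t - 1 := by linarith
  have final : 4*t*raB + 4*t^2*qB > K := by
    nlinarith [le_abs_self K, neg_abs_le raB, abs_nonneg K, abs_nonneg raB,
      mul_nonneg htn (by linarith [neg_abs_le raB] : (0:ℝ) ≤ |raB| + raB),
      mul_nonneg ht1' (abs_nonneg K), mul_nonneg ht1' hqBpos.le,
      mul_pos (lt_of_lt_of_le one_pos ht1) hqBpos]
  rw [hK] at final
  simp only [smul_eq_mul] at hmid
  -- debug: show hmid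
  ring_nf at hmid final
  linarith [hmid, final]
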